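/- Let $r_2 \le r_1 \le s_1 \le s_2$, $q_1 \le q_2 < s_2$ and $q_1 < s_1$ (all in $[1,\infty)$). Then for each Banach space $X$, every anisotropic $(s_1,q_1,r_1)$-summable sequence is anisotropic $(s_2,q_2,r_2)$-summable, and $\|(x_j)\|_{A(s_2,q_2,r_2)} \le \|(x_j)\|_{A(s_1,q_1,r_1)}$. -/

import Mathlib

open scoped BigOperators NNReal ENNReal

noncomputable section

/-- `(xs k)` belongs to `ℓ_r(X*)`. -/
def MemLr (r : ℝ) {X : Type*} [NormedAddCommGroup X] [NormedSpace ℝ X]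
    (xs : ℕ → X →L[ℝ] ℝ) : Prop :=
  Summable fun k => ‖xs k‖ ^ r

/-- The `ℓ_r(X*)` norm. -/
noncomputable def lrNorm (r : ℝ) {X : Type*} [NormedAddCommGroup X] [NormedSpace ℝ X]
    (xs : ℕ → X →L[ℝ] ℝ) : ℝ :=
  (∑' k, ‖xs k‖ ^ r) ^ (1 / r)

/-- Weakly `q`-summable sequences. -/
def WeaklySummable (q : ℝ) {X : Type*} [NormedAddCommGroup X] [NormedSpace ℝ X]
    (x : ℕ → X) : Prop :=
  ∀ f : X →L[ℝ] ℝ, Summable fun j => |f (x j)| ^ q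

/-- The weak `ℓ_q` norm. -/
noncomputable def weakNorm (q : ℝ) {X : Type*} [NormedAddCommGroup X] [NormedSpace ℝ X]
    (x : ℕ → X) : ℝ :=
  ⨆ f : {f : X →L[ℝ] ℝ // ‖f‖ ≤ 1}, (∑' j, |f.1 (x j)| ^ q) ^ (1 / q)

/-- Anisotropic `(s,q,r)`-summable sequences. -/
def AnisoSummable (s q r : ℝ) {X : Type*} [NormedAddCommGroup X] [NormedSpace ℝ X]
    (x : ℕ → X) : Prop :=
  ∀ xs : ℕ → X →L[ℝ] ℝ, MemLr r xs →
    (∀ j, Summable fun k => |xs k (x j)| ^ s) ∧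
      Summable fun j => (∑' k, |xs k (x j)| ^ s) ^ (q / s)

/-- The anisotropic `(s,q,r)` norm. -/
noncomputable def anisoNorm (s q r : ℝ) {X : Type*} [NormedAddCommGroup X] [NormedSpace ℝ X]
    (x : ℕ → X) : ℝ :=
  ⨆ xs : {xs : ℕ → X →L[ℝ] ℝ // MemLr r xs ∧ lrNorm r xs ≤ 1},
    (∑' j, (∑' k, |xs.1 k (x j)| ^ s) ^ (q / s)) ^ (1 / q)


private lemma rpow_incl {a : ℕ → ℝ} (ha : ∀ i, 0 ≤ a i) {p q : ℝ} (hp : 0 < p) (hpq : p ≤ q)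
    (hs : Summable fun i => a i ^ p) :
    Summable (fun i => a i ^ q) ∧ ∑' i, a i ^ q ≤ (∑' i, a i ^ p) ^ (q / p) := by
  set S := ∑' i, a i ^ p with hS
  have hq0 : 0 < q := lt_of_lt_of_le hp hpq
  have hb : ∀ i, 0 ≤ a i ^ p := fun i => Real.rpow_nonneg (ha i) p
  have hbS : ∀ i, a i ^ p ≤ S := fun i => Summable.le_tsum hs i fun j _ => hb j
  have hS0 : 0 ≤ S := tsum_nonneg hb
  have htpos : 0 < q / p := div_pos hq0 hp
  have ht1 : 1 ≤ q / p := (one_le_div hp).2 hpq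
  have ht0 : 0 ≤ q / p - 1 := by linarith
  have key : ∀ i, a i ^ q = (a i ^ p) ^ (q / p) := by
    intro i
    rw [← Real.rpow_mul (ha i)]
    congr 1
    field_simp
  have bound : ∀ i, a i ^ q ≤ S ^ (q / p - 1) * a i ^ p := by
    intro i
    rw [key i]
    rcases eq_or_lt_of_le (hb i) with h | h
    · rw [← h, Real.zero_rpow htpos.ne', mul_zero]
    · calc (a i ^ p) ^ (q / p) = (a i ^ p) ^ (q / p - 1) * a i ^ p := by
            rw [show q / p = (q / p - 1) + 1 by ring, Real.rpow_add_one h.ne']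
            ring_nf
      _ ≤ S ^ (q / p - 1) * a i ^ p :=
            mul_le_mul_of_nonneg_right (Real.rpow_le_rpow (hb i) (hbS i) ht0) (hb i)
  have hsum : Summable fun i => a i ^ q :=
    Summable.of_nonneg_of_le (fun i => Real.rpow_nonneg (ha i) q) bound (hs.mul_left _)
  refine ⟨hsum, ?_⟩
  calc ∑' i, a i ^ q ≤ ∑' i, S ^ (q / p - 1) * a i ^ p := Summable.tsum_le_tsum bound hsum (hs.mul_left _)
  _ = S ^ (q / p - 1) * S := by rw [tsum_mul_left]
  _ ≤ S ^ (q / p) := by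
      rcases eq_or_lt_of_le hS0 with h | h
      · rw [← h, mul_zero, Real.zero_rpow htpos.ne']
      · exact le_of_eq (by rw [Real.rpow_sub h, Real.rpow_one, div_mul_cancel₀ _ h.ne'])

private lemma rpow_incl_norm {a : ℕ → ℝ} (ha : ∀ i, 0 ≤ a i) {p q : ℝ} (hp : 0 < p) (hpq : p ≤ q)
    (hs : Summable fun i => a i ^ p) :
    (∑' i, a i ^ q) ^ (1 / q) ≤ (∑' i, a i ^ p) ^ (1 / p) := by
  have hq0 : 0 < q := lt_of_lt_of_le hp hpq
  have h := (rpow_incl ha hp hpq hs).2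
  have h0 : 0 ≤ ∑' i, a i ^ q := tsum_nonneg fun i => Real.rpow_nonneg (ha i) q
  have hS0 : 0 ≤ ∑' i, a i ^ p := tsum_nonneg fun i => Real.rpow_nonneg (ha i) p
  have hp' : p ≠ 0 := hp.ne'
  have hq' : q ≠ 0 := hq0.ne'
  calc (∑' i, a i ^ q) ^ (1 / q) ≤ ((∑' i, a i ^ p) ^ (q / p)) ^ (1 / q) :=
        Real.rpow_le_rpow h0 h (by positivity)
  _ = (∑' i, a i ^ p) ^ (1 / p) := by
        rw [← Real.rpow_mul hS0]
        congr 1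
        field_simp

private lemma tsum_le_one_of_lrNorm {X : Type*} [NormedAddCommGroup X] [NormedSpace ℝ X]
    {r : ℝ} (hr : 0 < r) {xs : ℕ → X →L[ℝ] ℝ} (h : lrNorm r xs ≤ 1) :
    ∑' k, ‖xs k‖ ^ r ≤ 1 := by
  have hS0 : 0 ≤ ∑' k, ‖xs k‖ ^ r := tsum_nonneg fun k => Real.rpow_nonneg (norm_nonneg _) r
  have h2 := Real.rpow_le_rpow (Real.rpow_nonneg hS0 _) h hr.le
  rwa [Real.one_rpow, ← Real.rpow_mul hS0, one_div, inv_mul_cancel₀ hr.ne', Real.rpow_one]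
    at h2

private lemma bdd_of_aniso {X : Type*} [NormedAddCommGroup X] [NormedSpace ℝ X]
    {s q r : ℝ} (hr : 1 ≤ r) (hq : 1 ≤ q) (hs : 0 < s)
    (x : ℕ → X) (hx : AnisoSummable s q r x) :
    BddAbove (Set.range fun xs : {xs : ℕ → X →L[ℝ] ℝ // MemLr r xs ∧ lrNorm r xs ≤ 1} =>
      (∑' j, (∑' k, |xs.1 k (x j)| ^ s) ^ (q / s)) ^ (1 / q)) := by
  by_contra hbdd
  have hr0 : 0 < r := lt_of_lt_of_le one_pos hr
  have hq0 : 0 < q := lt_of_lt_of_le one_pos hq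
  rw [not_bddAbove_iff] at hbdd
  have choice : ∀ n : ℕ, ∃ xs : ℕ → X →L[ℝ] ℝ, (MemLr r xs ∧ lrNorm r xs ≤ 1) ∧
      1 + (n : ℝ) * 2 ^ ((n : ℝ) * q) ≤
        (∑' j, (∑' k, |xs k (x j)| ^ s) ^ (q / s)) ^ (1 / q) := by
    intro n
    obtain ⟨y, hy, hlt⟩ := hbdd (1 + (n : ℝ) * 2 ^ ((n : ℝ) * q))
    obtain ⟨⟨xs, hxs⟩, rfl⟩ := hy
    exact ⟨xs, hxs, hlt.le⟩
  choose u hu hval using choice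
  set e : ℕ ≃ ℕ × ℕ := (Denumerable.eqv (ℕ × ℕ)).symm with he
  set F : ℕ × ℕ → (X →L[ℝ] ℝ) := fun p => ((2 : ℝ) ^ (-(p.1 : ℝ))) • u p.1 p.2 with hF
  set XS : ℕ → (X →L[ℝ] ℝ) := fun m => F (e m) with hXS
  have h2pos : ∀ a : ℝ, (0 : ℝ) < 2 ^ a := fun a => Real.rpow_pos_of_pos two_pos a
  have hFnorm : ∀ p : ℕ × ℕ, ‖F p‖ ^ r = 2 ^ (-(p.1 : ℝ) * r) * ‖u p.1 p.2‖ ^ r := by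
    intro p
    show ‖((2 : ℝ) ^ (-(p.1 : ℝ))) • u p.1 p.2‖ ^ r = _
    have h1 : ‖((2 : ℝ) ^ (-(p.1 : ℝ))) • u p.1 p.2‖ = |(2 : ℝ) ^ (-(p.1 : ℝ))| * ‖u p.1 p.2‖ := by
      have h2 := norm_smul ((2 : ℝ) ^ (-(p.1 : ℝ))) (u p.1 p.2)
      rwa [Real.norm_eq_abs] at h2
    rw [h1, abs_of_pos (h2pos _),
      Real.mul_rpow (h2pos _).le (norm_nonneg _), ← Real.rpow_mul (by norm_num : (0:ℝ) ≤ 2)]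
  have hutsum : ∀ n, ∑' k, ‖u n k‖ ^ r ≤ 1 := fun n => tsum_le_one_of_lrNorm hr0 (hu n).2
  have hgeo : Summable fun n : ℕ => ((2 : ℝ) ^ (-r)) ^ n :=
    summable_geometric_of_lt_one (h2pos _).le
      (Real.rpow_lt_one_of_one_lt_of_neg one_lt_two (neg_neg_iff_pos.mpr hr0))
  have hpow : ∀ n : ℕ, (2 : ℝ) ^ (-(n : ℝ) * r) = ((2 : ℝ) ^ (-r)) ^ n := by
    intro n
    rw [← Real.rpow_natCast ((2 : ℝ) ^ (-r)) n, ← Real.rpow_mul (by norm_num : (0:ℝ) ≤ 2)]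
    ring_nf
  have hmem : MemLr r XS := by
    have hsum2 : Summable fun p : ℕ × ℕ => ‖F p‖ ^ r := by
      apply (summable_prod_of_nonneg (fun p => Real.rpow_nonneg (norm_nonneg _) r)).mpr
      constructor
      · intro n
        simp only [hFnorm]
        exact ((hu n).1).mul_left _
      · apply Summable.of_nonneg_of_le _ _ hgeo
        · intro n
          exact tsum_nonneg fun k => Real.rpow_nonneg (norm_nonneg _) r
        · intro n
          calc ∑' k, ‖F (n, k)‖ ^ r = 2 ^ (-(n : ℝ) * r) * ∑' k, ‖u n k‖ ^ r := by
                simp only [hFnorm]; rw [tsum_mul_left]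
          _ ≤ 2 ^ (-(n : ℝ) * r) * 1 := mul_le_mul_of_nonneg_left (hutsum n) (h2pos _).le
          _ = ((2 : ℝ) ^ (-r)) ^ n := by rw [mul_one, hpow]
    exact (e.summable_iff (f := fun p : ℕ × ℕ => ‖F p‖ ^ r)).mpr hsum2
  obtain ⟨hinner, houter⟩ := hx XS hmem
  set T := ∑' j, (∑' m, |XS m (x j)| ^ s) ^ (q / s) with hT
  have hTnB : ∀ n : ℕ, (n : ℝ) ≤ T := by
    intro n
    obtain ⟨hin_u, hout_u⟩ := hx (u n) (hu n).1
    set Sn := ∑' j, (∑' k, |u n k (x j)| ^ s) ^ (q / s) with hSn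
    have hSn0 : 0 ≤ Sn :=
      tsum_nonneg fun j => Real.rpow_nonneg
        (tsum_nonneg fun k => Real.rpow_nonneg (abs_nonneg _) s) _
    have hn2 : (0 : ℝ) ≤ (n : ℝ) * 2 ^ ((n : ℝ) * q) := by positivity
    have hval1 : (1 : ℝ) ≤ Sn ^ (1 / q) := le_trans (by linarith) (hval n)
    have hSn_ge : (n : ℝ) * 2 ^ ((n : ℝ) * q) ≤ Sn := by
      have h1 : (n : ℝ) * 2 ^ ((n : ℝ) * q) ≤ Sn ^ (1 / q) := by linarith [hval n]
      have h2 : Sn ^ (1 / q) ≤ (Sn ^ (1 / q)) ^ q := by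
        calc Sn ^ (1 / q) = (Sn ^ (1 / q)) ^ (1 : ℝ) := (Real.rpow_one _).symm
        _ ≤ (Sn ^ (1 / q)) ^ q := Real.rpow_le_rpow_of_exponent_le hval1 hq
      have h3 : (Sn ^ (1 / q)) ^ q = Sn := by
        rw [← Real.rpow_mul hSn0, one_div, inv_mul_cancel₀ hq0.ne', Real.rpow_one]
      linarith
    have hstepb : ∀ j, 2 ^ (-(n : ℝ) * q) * (∑' k, |u n k (x j)| ^ s) ^ (q / s) ≤
        (∑' m, |XS m (x j)| ^ s) ^ (q / s) := by
      intro j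
      have hg : Summable fun p : ℕ × ℕ => |F p (x j)| ^ s :=
        (e.summable_iff (f := fun p : ℕ × ℕ => |F p (x j)| ^ s)).mp (hinner j)
      have hg0 : ∀ p : ℕ × ℕ, 0 ≤ |F p (x j)| ^ s := fun p => Real.rpow_nonneg (abs_nonneg _) s
      have hfib := (summable_prod_of_nonneg (fun p => hg0 p)).mp hg
      have hEq : ∑' m, |XS m (x j)| ^ s = ∑' (a : ℕ), ∑' (b : ℕ), |F (a, b) (x j)| ^ s := by
        rw [show (∑' m, |XS m (x j)| ^ s) = ∑' p : ℕ × ℕ, |F p (x j)| ^ s from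
          e.tsum_eq (f := fun p : ℕ × ℕ => |F p (x j)| ^ s)]
        exact Summable.tsum_prod' hg hfib.1
      have hA0 : (0:ℝ) ≤ ∑' k, |u n k (x j)| ^ s :=
        tsum_nonneg fun k => Real.rpow_nonneg (abs_nonneg _) s
      have hfibn : ∑' k, |F (n, k) (x j)| ^ s = 2 ^ (-(n : ℝ) * s) * ∑' k, |u n k (x j)| ^ s := by
        have hterm : ∀ k, |F (n, k) (x j)| ^ s = 2 ^ (-(n : ℝ) * s) * |u n k (x j)| ^ s := by
          intro k
          have hF2 : F (n, k) (x j) = 2 ^ (-(n : ℝ)) * u n k (x j) := rfl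
          rw [hF2, abs_mul, abs_of_pos (h2pos _),
            Real.mul_rpow (h2pos _).le (abs_nonneg _),
            ← Real.rpow_mul (by norm_num : (0:ℝ) ≤ 2)]
        simp only [hterm]
        rw [tsum_mul_left]
      have hle : 2 ^ (-(n : ℝ) * s) * (∑' k, |u n k (x j)| ^ s) ≤ ∑' m, |XS m (x j)| ^ s := by
        rw [hEq, ← hfibn]
        exact Summable.le_tsum hfib.2 n fun m _ => tsum_nonneg fun k => hg0 _
      calc 2 ^ (-(n : ℝ) * q) * (∑' k, |u n k (x j)| ^ s) ^ (q / s)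
          = (2 ^ (-(n : ℝ) * s) * ∑' k, |u n k (x j)| ^ s) ^ (q / s) := by
            rw [Real.mul_rpow (h2pos _).le hA0, ← Real.rpow_mul (by norm_num : (0:ℝ) ≤ 2)]
            congr 2
            field_simp
      _ ≤ (∑' m, |XS m (x j)| ^ s) ^ (q / s) := by
            apply Real.rpow_le_rpow (by positivity) hle (by positivity)
    have hcs : Summable fun j => 2 ^ (-(n : ℝ) * q) * (∑' k, |u n k (x j)| ^ s) ^ (q / s) :=
      hout_u.mul_left _
    have hTstep : 2 ^ (-(n : ℝ) * q) * Sn ≤ T := by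
      rw [hSn, ← tsum_mul_left]
      exact Summable.tsum_le_tsum hstepb hcs houter
    have hone : (2 : ℝ) ^ (-(n : ℝ) * q) * 2 ^ ((n : ℝ) * q) = 1 := by
      rw [← Real.rpow_add two_pos, neg_mul, neg_add_cancel, Real.rpow_zero]
    have hfinal : (n : ℝ) ≤ 2 ^ (-(n : ℝ) * q) * Sn :=
      calc (n : ℝ) = (2 ^ (-(n : ℝ) * q) * 2 ^ ((n : ℝ) * q)) * n := by rw [hone, one_mul]
      _ = 2 ^ (-(n : ℝ) * q) * ((n : ℝ) * 2 ^ ((n : ℝ) * q)) := by ring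
      _ ≤ 2 ^ (-(n : ℝ) * q) * Sn := mul_le_mul_of_nonneg_left hSn_ge (h2pos _).le
    linarith
  obtain ⟨n, hn⟩ := exists_nat_gt T
  exact absurd (hTnB n) (not_le.mpr hn)

theorem stmt4 {X : Type*} [NormedAddCommGroup X] [NormedSpace ℝ X] [CompleteSpace X]
    {s₁ s₂ q₁ q₂ r₁ r₂ : ℝ} (hr₂ : 1 ≤ r₂) (hr : r₂ ≤ r₁) (hrs : r₁ ≤ s₁) (hs : s₁ ≤ s₂)
    (hq₁ : 1 ≤ q₁) (hq : q₁ ≤ q₂) (hq₂s : q₂ < s₂) (hq₁s : q₁ < s₁)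
    (x : ℕ → X) (hx : AnisoSummable s₁ q₁ r₁ x) :
    AnisoSummable s₂ q₂ r₂ x ∧ anisoNorm s₂ q₂ r₂ x ≤ anisoNorm s₁ q₁ r₁ x := by
  have hr₂0 : 0 < r₂ := lt_of_lt_of_le one_pos hr₂
  have hr₁0 : (1:ℝ) ≤ r₁ := hr₂.trans hr
  have hs₁0 : 0 < s₁ := lt_of_lt_of_le hr₂0 (hr.trans hrs)
  have hq₁0 : 0 < q₁ := lt_of_lt_of_le one_pos hq₁
  have hq₂0 : 0 < q₂ := lt_of_lt_of_le hq₁0 hq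
  have hs₂0 : 0 < s₂ := lt_of_lt_of_le hs₁0 hs
  have key : ∀ xs : ℕ → X →L[ℝ] ℝ, MemLr r₂ xs →
      MemLr r₁ xs ∧ (∀ j, Summable fun k => |xs k (x j)| ^ s₂) ∧
      Summable (fun j => (∑' k, |xs k (x j)| ^ s₂) ^ (q₂ / s₂)) ∧
      (∑' j, (∑' k, |xs k (x j)| ^ s₂) ^ (q₂ / s₂)) ^ (1 / q₂) ≤
        (∑' j, (∑' k, |xs k (x j)| ^ s₁) ^ (q₁ / s₁)) ^ (1 / q₁) := by
    intro xs h₂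
    have hmem1 : MemLr r₁ xs := (rpow_incl (fun k => norm_nonneg _) hr₂0 hr h₂).1
    obtain ⟨hin, hout⟩ := hx xs hmem1
    have hin2 : ∀ j, Summable fun k => |xs k (x j)| ^ s₂ :=
      fun j => (rpow_incl (fun k => abs_nonneg _) hs₁0 hs (hin j)).1
    set A : ℕ → ℝ := fun j => ∑' k, |xs k (x j)| ^ s₁ with hA
    set B : ℕ → ℝ := fun j => ∑' k, |xs k (x j)| ^ s₂ with hB
    have hA0 : ∀ j, 0 ≤ A j := fun j => tsum_nonneg fun k => Real.rpow_nonneg (abs_nonneg _) _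
    have hB0 : ∀ j, 0 ≤ B j := fun j => tsum_nonneg fun k => Real.rpow_nonneg (abs_nonneg _) _
    have hBA : ∀ j, B j ≤ A j ^ (s₂ / s₁) :=
      fun j => (rpow_incl (fun k => abs_nonneg _) hs₁0 hs (hin j)).2
    have hkey : ∀ j, B j ^ (q₂ / s₂) ≤ A j ^ (q₂ / s₁) := by
      intro j
      calc B j ^ (q₂ / s₂) ≤ (A j ^ (s₂ / s₁)) ^ (q₂ / s₂) :=
            Real.rpow_le_rpow (hB0 j) (hBA j) (by positivity)
      _ = A j ^ (q₂ / s₁) := by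
            rw [← Real.rpow_mul (hA0 j)]
            congr 1
            field_simp
    have hrw1 : ∀ (j : ℕ) (t : ℝ), (A j ^ (1 / s₁)) ^ t = A j ^ (t / s₁) := by
      intro j t
      rw [← Real.rpow_mul (hA0 j)]
      congr 1
      field_simp
    have houtA1 : Summable fun j => (A j ^ (1 / s₁)) ^ q₁ := by
      simp only [hrw1]
      exact hout
    have houtA2 := rpow_incl (fun j => Real.rpow_nonneg (hA0 j) _) hq₁0 hq houtA1
    have hsumA2 : Summable fun j => A j ^ (q₂ / s₁) := by
      have := houtA2.1
      simp only [hrw1] at this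
      exact this
    have hsumB : Summable fun j => B j ^ (q₂ / s₂) :=
      Summable.of_nonneg_of_le (fun j => Real.rpow_nonneg (hB0 j) _) hkey hsumA2
    refine ⟨hmem1, hin2, hsumB, ?_⟩
    calc (∑' j, B j ^ (q₂ / s₂)) ^ (1 / q₂)
        ≤ (∑' j, A j ^ (q₂ / s₁)) ^ (1 / q₂) :=
          Real.rpow_le_rpow (tsum_nonneg fun j => Real.rpow_nonneg (hB0 j) _)
            (Summable.tsum_le_tsum hkey hsumB hsumA2) (by positivity)
    _ = (∑' j, (A j ^ (1 / s₁)) ^ q₂) ^ (1 / q₂) := by simp only [hrw1]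
    _ ≤ (∑' j, (A j ^ (1 / s₁)) ^ q₁) ^ (1 / q₁) :=
          rpow_incl_norm (fun j => Real.rpow_nonneg (hA0 j) _) hq₁0 hq houtA1
    _ = (∑' j, A j ^ (q₁ / s₁)) ^ (1 / q₁) := by simp only [hrw1]
  constructor
  · intro xs h₂
    obtain ⟨_, h1, h2, _⟩ := key xs h₂
    exact ⟨h1, h2⟩
  · have hbdd := bdd_of_aniso hr₁0 hq₁ hs₁0 x hx
    apply Real.iSup_le _ (Real.iSup_nonneg fun xs => Real.rpow_nonneg
      (tsum_nonneg fun j => Real.rpow_nonneg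
        (tsum_nonneg fun k => Real.rpow_nonneg (abs_nonneg _) _) _) _)
    rintro ⟨xs, hmem, hnorm⟩
    obtain ⟨hmem1, _, _, hle⟩ := key xs hmem
    have hnorm1 : lrNorm r₁ xs ≤ 1 := by
      have h2 := rpow_incl_norm (fun k => norm_nonneg (xs k)) hr₂0 hr hmem
      exact le_trans h2 hnorm
    exact le_trans hle (le_ciSup hbdd ⟨xs, hmem1, hnorm1⟩)
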